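/- Consider the configuration φ_r on Z^d with H(0) = 2d, H(x) = 2d-1 for all other x in the cube C(r) = {x : max_i |x_i| ≤ r}, and H(x) = 2d-2 outside C(r). When φ_r is stabilized under the abelian sandpile toppling rule, every site x topples exactly max{r+1 − max_i |x_i|, 0} times. -/

import Mathlib

/-- The `i`-th standard unit vector of `ℤ^d`. -/
def unitVec (d : ℕ) (i : Fin d) : Fin d → ℤ := fun j => if j = i then 1 else 0

/-- Height function obtained from the initial heights `H0` after performing `T x` (sandpile)
topplings at every site `x`: each toppling of `x` removes `2d` particles from `x` and sends
one particle to each of its `2d` nearest neighbors. -/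
def newH (d : ℕ) (H0 : (Fin d → ℤ) → ℤ) (T : (Fin d → ℤ) → ℕ) (x : Fin d → ℤ) : ℤ :=
  H0 x - 2 * d * T x + ∑ i : Fin d, ((T (x + unitVec d i) : ℤ) + (T (x - unitVec d i) : ℤ))

/-- A sandpile height function is stable if every site has at most `2d - 1` particles. -/
def SandpileStable (d : ℕ) (H : (Fin d → ℤ) → ℤ) : Prop := ∀ x, H x ≤ 2 * d - 1

/-- `T` is the odometer (toppling function of the stabilization) of the initial configuration
`H0`: it has finite support, its result is stable, and it is pointwise minimal among all
finitely supported toppling functions with stable result (least action principle; this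
characterizes the toppling function produced by legal topplings, by the abelian property). -/
def IsOdometer (d : ℕ) (H0 : (Fin d → ℤ) → ℤ) (T : (Fin d → ℤ) → ℕ) : Prop :=
  (Function.support T).Finite ∧ SandpileStable d (newH d H0 T) ∧
    ∀ T' : (Fin d → ℤ) → ℕ, (Function.support T').Finite →
      SandpileStable d (newH d H0 T') → ∀ x, T x ≤ T' x

/-- Initial configuration: `n` particles at the origin, background height `h` elsewhere. -/
def initH (d : ℕ) (n : ℕ) (h : ℤ) : (Fin d → ℤ) → ℤ := fun x => if x = 0 then (n : ℤ) else h

/-- The configuration `φ_r`: `2d` particles at the origin, `2d - 1` at every other site of the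
cube `C(r)`, and `2d - 2` outside `C(r)`. -/
noncomputable def phi (d : ℕ) (r : ℕ) : (Fin d → ℤ) → ℤ := fun x =>
  if x = 0 then 2 * d
  else if ∀ i, |x i| ≤ (r : ℤ) then 2 * d - 1
  else 2 * d - 2

namespace SandAux

variable (d r : ℕ)

/-- sup norm -/
def mfun (x : Fin d → ℤ) : ℕ := Finset.univ.sup fun i => (x i).natAbs

/-- candidate odometer -/
def T0 (x : Fin d → ℤ) : ℕ := (r + 1) - mfun d x

lemma coord_le_mfun (x : Fin d → ℤ) (i : Fin d) : (x i).natAbs ≤ mfun d x :=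
  Finset.le_sup (f := fun i => (x i).natAbs) (Finset.mem_univ i)

lemma mfun_le_iff (x : Fin d → ℤ) (c : ℕ) : mfun d x ≤ c ↔ ∀ i, (x i).natAbs ≤ c := by
  simp [mfun]

lemma exists_attains (hd : 1 ≤ d) (x : Fin d → ℤ) : ∃ j, mfun d x = (x j).natAbs := by
  haveI : Nonempty (Fin d) := ⟨⟨0, hd⟩⟩
  obtain ⟨j, _, hj⟩ := Finset.exists_mem_eq_sup (Finset.univ : Finset (Fin d))
    Finset.univ_nonempty (fun i => (x i).natAbs)
  exact ⟨j, hj⟩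

lemma add_unit_apply (x : Fin d → ℤ) (i j : Fin d) :
    (x + unitVec d i) j = x j + if j = i then 1 else 0 := rfl

lemma sub_unit_apply (x : Fin d → ℤ) (i j : Fin d) :
    (x - unitVec d i) j = x j - if j = i then 1 else 0 := rfl

lemma mfun_add_ge (x : Fin d → ℤ) (i : Fin d) : mfun d x ≤ mfun d (x + unitVec d i) + 1 := by
  rw [mfun, Finset.sup_le_iff]
  intro j _
  have h := coord_le_mfun d (x + unitVec d i) j
  rw [add_unit_apply] at h
  by_cases hji : j = i
  · subst hji; rw [if_pos rfl] at h; omega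
  · rw [if_neg hji] at h; omega

lemma mfun_sub_ge (x : Fin d → ℤ) (i : Fin d) : mfun d x ≤ mfun d (x - unitVec d i) + 1 := by
  rw [mfun, Finset.sup_le_iff]
  intro j _
  have h := coord_le_mfun d (x - unitVec d i) j
  rw [sub_unit_apply] at h
  by_cases hji : j = i
  · subst hji; rw [if_pos rfl] at h; omega
  · rw [if_neg hji] at h; omega

lemma mfun_add_le (x : Fin d → ℤ) (i : Fin d) : mfun d (x + unitVec d i) ≤ mfun d x + 1 := by
  rw [mfun, Finset.sup_le_iff]
  intro j _
  have h := coord_le_mfun d x j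
  rw [add_unit_apply]
  by_cases hj : j = i
  · subst hj; rw [if_pos rfl]; omega
  · rw [if_neg hj]; omega

lemma mfun_sub_le (x : Fin d → ℤ) (i : Fin d) : mfun d (x - unitVec d i) ≤ mfun d x + 1 := by
  rw [mfun, Finset.sup_le_iff]
  intro j _
  have h := coord_le_mfun d x j
  rw [sub_unit_apply]
  by_cases hj : j = i
  · subst hj; rw [if_pos rfl]; omega
  · rw [if_neg hj]; omega

lemma T0_antitone (y : Fin d → ℤ) (c : ℕ) (h : c ≤ mfun d y) : T0 d r y ≤ (r + 1) - c :=
  Nat.sub_le_sub_left h _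

lemma phi_zero : phi d r 0 = 2 * d := by simp [phi]

lemma phi_in (x : Fin d → ℤ) (hx : x ≠ 0) (h : mfun d x ≤ r) : phi d r x = 2 * d - 1 := by
  rw [phi]
  rw [if_neg hx, if_pos]
  intro i
  have := (mfun_le_iff d x r).mp h i
  rw [Int.abs_eq_natAbs]
  exact_mod_cast this

lemma phi_out (x : Fin d → ℤ) (h : r < mfun d x) : phi d r x = 2 * d - 2 := by
  have h2 : ¬ ∀ i, |x i| ≤ (r : ℤ) := by
    intro hall
    have : mfun d x ≤ r := (mfun_le_iff d x r).mpr (fun i => by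
      have := hall i
      rw [Int.abs_eq_natAbs] at this
      exact_mod_cast this)
    omega
  have hx : x ≠ 0 := by
    intro h0
    exact h2 (fun i => by simp [h0])
  rw [phi, if_neg hx, if_neg h2]

/-- per-coordinate bound in the bulk -/
lemma per_coord (hd : 1 ≤ d) (x : Fin d → ℤ) (i : Fin d) (h1 : 1 ≤ mfun d x)
    (h2 : mfun d x ≤ r) :
    (T0 d r (x + unitVec d i) : ℤ) + (T0 d r (x - unitVec d i) : ℤ)
      ≤ 2 * ((r : ℤ) + 1 - mfun d x) := by
  set m := mfun d x with hm
  have hplus := mfun_add_ge d x i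
  have hminus := mfun_sub_ge d x i
  by_cases hi : (x i).natAbs = m
  · -- coordinate i attains the max
    have hxi : x i = (m : ℤ) ∨ x i = -(m : ℤ) := by omega
    rcases hxi with hxi | hxi
    · -- x i = m ≥ 1 : outward is +e_i
      have hout : m + 1 ≤ mfun d (x + unitVec d i) := by
        have h := coord_le_mfun d (x + unitVec d i) i
        rw [add_unit_apply, if_pos rfl, hxi] at h
        omega
      have hA := T0_antitone d r (x + unitVec d i) (m + 1) hout
      have hBge : m - 1 ≤ mfun d (x - unitVec d i) := by omega
      have hB := T0_antitone d r (x - unitVec d i) (m - 1) hBge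
      omega
    · -- x i = -m : outward is -e_i
      have hout : m + 1 ≤ mfun d (x - unitVec d i) := by
        have h := coord_le_mfun d (x - unitVec d i) i
        rw [sub_unit_apply, if_pos rfl, hxi] at h
        omega
      have hB := T0_antitone d r (x - unitVec d i) (m + 1) hout
      have hAge : m - 1 ≤ mfun d (x + unitVec d i) := by omega
      have hA := T0_antitone d r (x + unitVec d i) (m - 1) hAge
      omega
  · -- max attained at some j ≠ i
    obtain ⟨j, hj⟩ := exists_attains d hd x
    have hji : j ≠ i := by
      intro h; rw [h] at hj; exact hi hj.symm
    have hAge : m ≤ mfun d (x + unitVec d i) := by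
      have h := coord_le_mfun d (x + unitVec d i) j
      rw [add_unit_apply, if_neg hji] at h
      omega
    have hBge : m ≤ mfun d (x - unitVec d i) := by
      have h := coord_le_mfun d (x - unitVec d i) j
      rw [sub_unit_apply, if_neg hji] at h
      omega
    have hA := T0_antitone d r (x + unitVec d i) m hAge
    have hB := T0_antitone d r (x - unitVec d i) m hBge
    omega

lemma mfun_zero : mfun d (0 : Fin d → ℤ) = 0 := by
  simp [mfun]

lemma stable_T0 (hd : 1 ≤ d) : SandpileStable d (newH d (phi d r) (T0 d r)) := by
  intro x
  rw [newH]
  by_cases hx : x = 0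
  · subst hx
    rw [phi_zero]
    have hT00 : T0 d r 0 = r + 1 := by rw [T0, mfun_zero]; omega
    have hnb : ∀ i : Fin d, ((T0 d r (0 + unitVec d i) : ℤ) + (T0 d r (0 - unitVec d i) : ℤ))
        = 2 * r := by
      intro i
      have h1 : mfun d ((0 : Fin d → ℤ) + unitVec d i) = 1 := by
        apply le_antisymm
        · rw [mfun, Finset.sup_le_iff]
          intro j _
          rw [add_unit_apply]
          by_cases hji : j = i <;> simp [hji]
        · have h := coord_le_mfun d ((0 : Fin d → ℤ) + unitVec d i) i
          rw [add_unit_apply, if_pos rfl] at h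
          simpa using h
      have h2 : mfun d ((0 : Fin d → ℤ) - unitVec d i) = 1 := by
        apply le_antisymm
        · rw [mfun, Finset.sup_le_iff]
          intro j _
          rw [sub_unit_apply]
          by_cases hji : j = i <;> simp [hji]
        · have h := coord_le_mfun d ((0 : Fin d → ℤ) - unitVec d i) i
          rw [sub_unit_apply, if_pos rfl] at h
          simpa using h
      rw [T0, T0, h1, h2]
      push_cast
      omega
    rw [Finset.sum_congr rfl (fun i _ => hnb i), Finset.sum_const, Finset.card_univ,
      Fintype.card_fin, hT00, nsmul_eq_mul]
    have hd' : (1 : ℤ) ≤ d := by exact_mod_cast hd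
    push_cast
    nlinarith [hd']
  · have h1 : 1 ≤ mfun d x := by
      obtain ⟨i, hi⟩ := Function.ne_iff.mp hx
      have hi' : x i ≠ 0 := hi
      have h2 := coord_le_mfun d x i
      omega
    by_cases hmr : mfun d x ≤ r
    · rw [phi_in d r x hx hmr]
      have hsum : ∑ i : Fin d, ((T0 d r (x + unitVec d i) : ℤ) + (T0 d r (x - unitVec d i) : ℤ))
          ≤ ∑ _i : Fin d, 2 * ((r : ℤ) + 1 - mfun d x) :=
        Finset.sum_le_sum (fun i _ => per_coord d r hd x i h1 hmr)
      rw [Finset.sum_const, Finset.card_univ, Fintype.card_fin, nsmul_eq_mul] at hsum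
      have hT0x : (T0 d r x : ℤ) = (r : ℤ) + 1 - mfun d x := by
        rw [T0]; omega
      rw [hT0x]
      linarith [hsum]
    · rw [phi_out d r x (by omega)]
      have hT0x : T0 d r x = 0 := by rw [T0]; omega
      rw [hT0x]
      by_cases hm2 : r + 2 ≤ mfun d x
      · have hz : ∀ i : Fin d,
            ((T0 d r (x + unitVec d i) : ℤ) + (T0 d r (x - unitVec d i) : ℤ)) = 0 := by
          intro i
          have hA := mfun_add_ge d x i
          have hB := mfun_sub_ge d x i
          have hA0 : T0 d r (x + unitVec d i) = 0 := by
            rw [T0]; omega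
          have hB0 : T0 d r (x - unitVec d i) = 0 := by
            rw [T0]; omega
          rw [hA0, hB0]; simp
        rw [Finset.sum_congr rfl (fun i _ => hz i), Finset.sum_const]
        simp
      · -- mfun x = r + 1
        have hm : mfun d x = r + 1 := by omega
        by_cases hall : ∀ i : Fin d, T0 d r (x + unitVec d i) = 0 ∧ T0 d r (x - unitVec d i) = 0
        · have : ∑ i : Fin d,
              ((T0 d r (x + unitVec d i) : ℤ) + (T0 d r (x - unitVec d i) : ℤ)) = 0 :=
            Finset.sum_eq_zero (fun i _ => by rw [(hall i).1, (hall i).2]; simp)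
          rw [this]
          omega
        · push_neg at hall
          obtain ⟨i, hi⟩ := hall
          -- in either case, |x i| = r+1 and the relevant neighbor has mfun ≤ r
          have key : ∀ j : Fin d, j ≠ i → (x j).natAbs ≤ r := by
            intro j hji
            rcases Classical.em (T0 d r (x + unitVec d i) ≠ 0) with hA | hA
            · have hmA : mfun d (x + unitVec d i) ≤ r := by
                by_contra hc
                exact hA (by rw [T0]; omega)
              have h := coord_le_mfun d (x + unitVec d i) j
              rw [add_unit_apply, if_neg hji] at h
              omega
            · have hB : T0 d r (x - unitVec d i) ≠ 0 := by tauto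
              have hmB : mfun d (x - unitVec d i) ≤ r := by
                by_contra hc
                exact hB (by rw [T0]; omega)
              have h := coord_le_mfun d (x - unitVec d i) j
              rw [sub_unit_apply, if_neg hji] at h
              omega
          have hxi : (x i).natAbs = r + 1 := by
            obtain ⟨j, hj⟩ := exists_attains d hd x
            by_cases hji : j = i
            · rw [hji] at hj; omega
            · have := key j hji; omega
          -- the sum reduces to the single index i
          have hzero : ∀ j : Fin d, j ≠ i →
              ((T0 d r (x + unitVec d j) : ℤ) + (T0 d r (x - unitVec d j) : ℤ)) = 0 := by
            intro j hji
            have hij : i ≠ j := fun h => hji h.symm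
            have hA : mfun d (x + unitVec d j) ≥ r + 1 := by
              have h := coord_le_mfun d (x + unitVec d j) i
              rw [add_unit_apply, if_neg hij] at h
              omega
            have hB : mfun d (x - unitVec d j) ≥ r + 1 := by
              have h := coord_le_mfun d (x - unitVec d j) i
              rw [sub_unit_apply, if_neg hij] at h
              omega
            have hA0 : T0 d r (x + unitVec d j) = 0 := by rw [T0]; omega
            have hB0 : T0 d r (x - unitVec d j) = 0 := by rw [T0]; omega
            rw [hA0, hB0]; simp
          have hsum : ∑ j : Fin d,
              ((T0 d r (x + unitVec d j) : ℤ) + (T0 d r (x - unitVec d j) : ℤ))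
              = (T0 d r (x + unitVec d i) : ℤ) + (T0 d r (x - unitVec d i) : ℤ) :=
            Finset.sum_eq_single i (fun j _ hji => hzero j hji) (fun h => absurd (Finset.mem_univ i) h)
          rw [hsum]
          -- now bound the two terms at i
          have hxival : x i = (r : ℤ) + 1 ∨ x i = -((r : ℤ) + 1) := by omega
          rcases hxival with hv | hv
          · -- outward +, inward is -e_i
            have hA : mfun d (x + unitVec d i) ≥ r + 2 := by
              have h := coord_le_mfun d (x + unitVec d i) i
              rw [add_unit_apply, if_pos rfl, hv] at h
              have : ((r : ℤ) + 1 + 1).natAbs = r + 2 := by omega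
              omega
            have hA0 : T0 d r (x + unitVec d i) = 0 := by rw [T0]; omega
            have hBge : mfun d (x - unitVec d i) ≥ r := by
              have h := coord_le_mfun d (x - unitVec d i) i
              rw [sub_unit_apply, if_pos rfl, hv] at h
              have : ((r : ℤ) + 1 - 1).natAbs = r := by omega
              omega
            have hB1 : T0 d r (x - unitVec d i) ≤ 1 := by
              have := T0_antitone d r (x - unitVec d i) r hBge
              omega
            rw [hA0]
            push_cast
            omega
          · have hB : mfun d (x - unitVec d i) ≥ r + 2 := by
              have h := coord_le_mfun d (x - unitVec d i) i
              rw [sub_unit_apply, if_pos rfl, hv] at h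
              have : (-((r : ℤ) + 1) - 1).natAbs = r + 2 := by omega
              omega
            have hB0 : T0 d r (x - unitVec d i) = 0 := by rw [T0]; omega
            have hAge : mfun d (x + unitVec d i) ≥ r := by
              have h := coord_le_mfun d (x + unitVec d i) i
              rw [add_unit_apply, if_pos rfl, hv] at h
              have : (-((r : ℤ) + 1) + 1).natAbs = r := by omega
              omega
            have hA1 : T0 d r (x + unitVec d i) ≤ 1 := by
              have := T0_antitone d r (x + unitVec d i) r hAge
              omega
            rw [hB0]
            push_cast
            omega

lemma support_T0_finite : (Function.support (T0 d r)).Finite := by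
  apply Set.Finite.subset (Set.Finite.pi (fun _ : Fin d => Set.finite_Icc (-(r : ℤ)) r))
  intro x hx
  have hm : mfun d x ≤ r := by
    by_contra hc
    exact hx (by rw [T0]; omega)
  intro i _
  have := (mfun_le_iff d x r).mp hm i
  constructor <;> omega

lemma lower_step (hd : 1 ≤ d) (T' : (Fin d → ℤ) → ℕ)
    (hst : SandpileStable d (newH d (phi d r) T')) (s : ℕ)
    (ihout : ∀ z, s + mfun d z ≤ r + 1 → s ≤ T' z) :
    ∀ n (y : Fin d → ℤ), (∑ i, (y i).natAbs) = n → s + 1 + mfun d y ≤ r + 1 →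
      s + 1 ≤ T' y := by
  intro n
  induction n using Nat.strong_induction_on with
  | _ n ihn =>
  intro y hn hy
  by_contra hTy
  have hTys : T' y = s := le_antisymm (by omega) (ihout y (by omega))
  have hnbge : ∀ i : Fin d, s ≤ T' (y + unitVec d i) ∧ s ≤ T' (y - unitVec d i) := by
    intro i
    exact ⟨ihout _ (by have := mfun_add_le d y i; omega),
           ihout _ (by have := mfun_sub_le d y i; omega)⟩
  have hstab := hst y
  rw [newH, hTys] at hstab
  by_cases hy0 : y = 0
  · subst hy0
    rw [phi_zero] at hstab
    have hsumge : (d : ℤ) * (2 * s)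
        ≤ ∑ i : Fin d, ((T' (0 + unitVec d i) : ℤ) + (T' (0 - unitVec d i) : ℤ)) := by
      calc (d : ℤ) * (2 * s) = ∑ _i : Fin d, ((s : ℤ) + (s : ℤ)) := by
            rw [Finset.sum_const, Finset.card_univ, Fintype.card_fin, nsmul_eq_mul]; ring
        _ ≤ _ := Finset.sum_le_sum (fun i _ => by
            have h := hnbge i
            push_cast
            omega)
    nlinarith [hsumge, hstab]
  · have hmy : mfun d y ≤ r := by omega
    rw [phi_in d r y hy0 hmy] at hstab
    have hsumle : ∑ i : Fin d, ((T' (y + unitVec d i) : ℤ) + (T' (y - unitVec d i) : ℤ))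
        ≤ (d : ℤ) * (2 * s) := by linarith [hstab]
    have hforce : ∀ i : Fin d, T' (y + unitVec d i) = s ∧ T' (y - unitVec d i) = s := by
      by_contra hc
      push_neg at hc
      obtain ⟨i0, hi0⟩ := hc
      have hlt : (∑ _i : Fin d, (2 * (s : ℤ)))
          < ∑ i : Fin d, ((T' (y + unitVec d i) : ℤ) + (T' (y - unitVec d i) : ℤ)) := by
        apply Finset.sum_lt_sum (fun i _ => by have h := hnbge i; push_cast; omega)
        refine ⟨i0, Finset.mem_univ i0, ?_⟩
        have h := hnbge i0
        by_cases hA : T' (y + unitVec d i0) = s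
        · have hB := hi0 hA
          push_cast
          omega
        · push_cast
          omega
      rw [Finset.sum_const, Finset.card_univ, Fintype.card_fin, nsmul_eq_mul] at hlt
      nlinarith [hlt, hsumle]
    obtain ⟨i, hi⟩ := Function.ne_iff.mp hy0
    have hi' : y i ≠ 0 := hi
    rcases lt_or_gt_of_ne hi' with hneg | hpos
    · -- y i < 0 : inward neighbor is y + e_i
      have hTz : T' (y + unitVec d i) = s := (hforce i).1
      have happ : ∀ j, (y + unitVec d i) j = y j + if j = i then 1 else 0 := fun j => rfl
      have hL1 : ∑ j, ((y + unitVec d i) j).natAbs < ∑ j, (y j).natAbs := by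
        apply Finset.sum_lt_sum
        · intro j _
          rw [happ]
          by_cases hj : j = i
          · subst hj; rw [if_pos rfl]; omega
          · rw [if_neg hj]; omega
        · refine ⟨i, Finset.mem_univ i, ?_⟩
          rw [happ, if_pos rfl]
          omega
      have hmz : mfun d (y + unitVec d i) ≤ mfun d y := by
        rw [mfun, Finset.sup_le_iff]
        intro j _
        have hc := coord_le_mfun d y j
        rw [happ]
        by_cases hj : j = i
        · subst hj; rw [if_pos rfl]; omega
        · rw [if_neg hj]; omega
      have := ihn _ (by omega) (y + unitVec d i) rfl (by omega)
      omega
    · -- y i > 0 : inward neighbor is y - e_i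
      have hTz : T' (y - unitVec d i) = s := (hforce i).2
      have happ : ∀ j, (y - unitVec d i) j = y j - if j = i then 1 else 0 := fun j => rfl
      have hL1 : ∑ j, ((y - unitVec d i) j).natAbs < ∑ j, (y j).natAbs := by
        apply Finset.sum_lt_sum
        · intro j _
          rw [happ]
          by_cases hj : j = i
          · subst hj; rw [if_pos rfl]; omega
          · rw [if_neg hj]; omega
        · refine ⟨i, Finset.mem_univ i, ?_⟩
          rw [happ, if_pos rfl]
          omega
      have hmz : mfun d (y - unitVec d i) ≤ mfun d y := by
        rw [mfun, Finset.sup_le_iff]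
        intro j _
        have hc := coord_le_mfun d y j
        rw [happ]
        by_cases hj : j = i
        · subst hj; rw [if_pos rfl]; omega
        · rw [if_neg hj]; omega
      have := ihn _ (by omega) (y - unitVec d i) rfl (by omega)
      omega

lemma lower_bound (hd : 1 ≤ d) (T' : (Fin d → ℤ) → ℕ)
    (hst : SandpileStable d (newH d (phi d r) T')) :
    ∀ s x, s + mfun d x ≤ r + 1 → s ≤ T' x := by
  intro s
  induction s with
  | zero => intro x _; exact Nat.zero_le _
  | succ s ih => intro x hx; exact lower_step d r hd T' hst s ih _ x rfl hx

end SandAux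

theorem phi_odometer_formula (d : ℕ) (hd : 1 ≤ d) (r : ℕ)
    (T : (Fin d → ℤ) → ℕ) (hT : IsOdometer d (phi d r) T) :
    ∀ x : Fin d → ℤ,
      (T x : ℤ) = max ((r : ℤ) + 1 - ((Finset.univ.sup fun i => (x i).natAbs : ℕ) : ℤ)) 0 := by
  intro x
  have hle : T x ≤ SandAux.T0 d r x :=
    hT.2.2 _ (SandAux.support_T0_finite d r) (SandAux.stable_T0 d r hd) x
  have hge : SandAux.T0 d r x ≤ T x := by
    rw [SandAux.T0]
    rcases le_or_gt (SandAux.mfun d x) r with h | h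
    · have := SandAux.lower_bound d r hd T hT.2.1 (r + 1 - SandAux.mfun d x) x (by omega)
      omega
    · omega
  have heq : T x = SandAux.T0 d r x := le_antisymm hle hge
  rw [heq, SandAux.T0]
  have hmm : (Finset.univ.sup fun i => (x i).natAbs) = SandAux.mfun d x := rfl
  rw [hmm]
  rcases le_total ((r : ℤ) + 1 - (SandAux.mfun d x : ℤ)) 0 with h | h
  · rw [max_eq_right h]; omega
  · rw [max_eq_left h]; omega
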